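/- Exact-estimation case of Lemma 1: let G = (V, E) be a finite simple undirected graph with |V| ≥ 2, |E| ≥ 1, and no self-loops, let D be the reduction database constructed from G, let e_r = {v_i, v_j} ∈ E, and let p = {A_E = x_r, A_i = x_1, A_j = x_1}. If S ⊆ 𝒜 satisfies A_E ∈ S, A_i ∈ S, and A_j ∉ S, then c_D({A_E = x_r, A_i = x_1}) = 2·|E| and Est(p, L_S(D)) = |E| = c_D(p), so Err(L_S(D), p) = 0. -/

import Mathlib

open Finset

namespace PatternLabel

/-- Attributes of the reduction database: `none` is the edge attribute `A_E`;
`some v` is the vertex attribute `A_v`. -/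
abbrev Attr (V : Type*) := Option V

/-- Values of the reduction database: `Sum.inl e` is the domain value `x_r` of `A_E`
corresponding to the edge `e = e_r`; `Sum.inr 0` is `x_1` and `Sum.inr 1` is `x_2`. -/
abbrev Val (V : Type*) := Sym2 V ⊕ Fin 2

/-- A tuple is a partial assignment of values to attributes (`Option.none` = undefined). -/
abbrev Tup (V : Type*) := Attr V → Option (Val V)

variable {V : Type*} [Fintype V] [DecidableEq V]

/-- The (at most two) endpoints of an unordered pair of vertices, as a finset. -/
def endpoints (z : Sym2 V) : Finset V := Finset.univ.filter (fun v => v ∈ z)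

/-- The tuple whose edge attribute `A_E` has value `x_e` for `eo = some e` (and is
undefined for `eo = none`), and whose vertex attribute `A_v` has value `x_{g v + 1}`
for `v ∈ P` and is undefined for `v ∉ P`. -/
def tupleOf (eo : Option (Sym2 V)) (P : Finset V) (g : V → Fin 2) : Tup V := fun A =>
  match A with
  | none => eo.map Sum.inl
  | some v => if v ∈ P then some (Sum.inr (g v)) else none

variable (G : SimpleGraph V) [DecidableRel G.Adj]

/-- `|E|`, the number of edges of the graph. -/
def numE : ℕ := G.edgeFinset.card

/-- The reduction database `D` built from the simple graph `G = (V, E)`: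
* for each edge `e_r = {v_i, v_j} ∈ E` and each `(p, q) ∈ {1,2}²`, `|E|` copies of the
  tuple defined only on `A_E, A_i, A_j` with `A_E = x_r`, `A_i = x_p`, `A_j = x_q`;
* for each unordered pair `{v_i, v_j}` of distinct vertices with `{v_i, v_j} ∉ E` and
  each `(p, q) ∈ {1,2}²`, `|E|` copies of the tuple defined only on `A_i, A_j` with
  `A_i = x_p`, `A_j = x_q`;
* for each edge `{v_i, v_j} ∈ E` and each `p ∈ {1,2}`, `2·|E|²` copies of the tuple
  defined only on `A_i, A_j` with `A_i = x_p`, `A_j = x_p`. -/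
def redDB : Multiset (Tup V) :=
  (∑ e ∈ G.edgeFinset,
      numE G • (Finset.univ.image fun g : V → Fin 2 => tupleOf (some e) (endpoints e) g).val)
    + (∑ z ∈ (Finset.univ : Finset V).sym2.filter
          (fun z => ¬ z.IsDiag ∧ z ∉ G.edgeFinset),
        numE G • (Finset.univ.image fun g : V → Fin 2 => tupleOf none (endpoints z) g).val)
    + (∑ e ∈ G.edgeFinset,
        (2 * numE G ^ 2) •
          (Finset.univ.image fun p : Fin 2 => tupleOf none (endpoints e) fun _ => p).val)

/-- The count `c_D(p)` of the pattern `p` with attribute set `T` and value assignment `f`: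
the number of tuples of `D` (with multiplicity) that are defined on every attribute of `T`
and agree with `f` there. -/
def cnt (D : Multiset (Tup V)) (T : Finset (Attr V)) (f : Attr V → Val V) : ℕ :=
  (D.filter fun t => ∀ A ∈ T, t A = some (f A)).card

/-- The count `c_D({A = w})` of tuples defined on attribute `A` with value `w` there. -/
def cnt1 (D : Multiset (Tup V)) (A : Attr V) (w : Val V) : ℕ :=
  (D.filter fun t => t A = some w).card

/-- The domain of an attribute: `Dom(A_v) = {x_1, x_2}` and `Dom(A_E) = {x_r : e_r ∈ E}`. -/
def dom (A : Attr V) : Finset (Val V) :=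
  match A with
  | none => G.edgeFinset.image Sum.inl
  | some _ => {Sum.inr 0, Sum.inr 1}

/-- The count estimate `Est(p, L_S(D))` of the pattern `p = (T, f)` using the label over
`S`: `c_D(p|_S) · ∏_{A ∈ Attr(p) \ S} c_D({A = p.A}) / (Σ_{a ∈ Dom(A)} c_D({A = a}))`. -/
def est (D : Multiset (Tup V)) (S T : Finset (Attr V)) (f : Attr V → Val V) : ℚ :=
  (cnt D (T ∩ S) f : ℚ) *
    ∏ A ∈ T \ S, (cnt1 D A (f A) : ℚ) / (∑ w ∈ dom G A, (cnt1 D A w : ℚ))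

/-- The estimation error `Err(L_S(D), p) = |c_D(p) − Est(p, L_S(D))|`. -/
def err (D : Multiset (Tup V)) (S T : Finset (Attr V)) (f : Attr V → Val V) : ℚ :=
  |(cnt D T f : ℚ) - est G D S T f|

/-- The attribute set `{A_E, A_i, A_j}` of the reduction pattern of the edge `e = {v_i, v_j}`. -/
def patT (e : Sym2 V) : Finset (Attr V) := insert none ((endpoints e).image some)

/-- The value assignment of the reduction pattern of the edge `e = e_r`:
`A_E = x_r` and `A_v = x_1` on vertex attributes. -/
def patF (e : Sym2 V) : Attr V → Val V := fun A =>
  match A with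
  | none => Sum.inl e
  | some _ => Sum.inr 0

/-- The label size `|L_S(D)|`: the number of patterns `q` with `Attr(q) = S` (assignments
of a value to each attribute of `S`) and `c_D(q) > 0`, where a tuple satisfies `q` if it is
defined on all attributes of `S` and agrees with `q` there. -/
def labelSize (D : Multiset (Tup V)) (S : Finset (Attr V)) : ℕ :=
  (Finset.univ.filter fun f : {A : Attr V // A ∈ S} → Val V =>
    0 < (D.filter fun t => ∀ A : {A : Attr V // A ∈ S}, t A.1 = some (f A)).card).card

/-- `Err(L_S(D), 𝒫)`: the maximum error of the label over `S` with respect to the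
reduction's pattern set `𝒫 = { {A_E = x_r, A_i = x_1, A_j = x_1} : e_r = {v_i, v_j} ∈ E }`. -/
def errSet (D : Multiset (Tup V)) (S : Finset (Attr V)) (hE : G.edgeFinset.Nonempty) : ℚ :=
  G.edgeFinset.sup' hE fun e => err G D S (patT e) (patF e)


set_option linter.unusedSectionVars false
set_option maxHeartbeats 1000000

lemma endpoints_mk (u v : V) : endpoints (s(u,v)) = {u, v} := by
  ext x; simp [endpoints, Sym2.mem_iff]

@[simp] lemma tupleOf_none' (eo : Option (Sym2 V)) (P : Finset V) (g : V → Fin 2) :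
    tupleOf eo P g none = eo.map Sum.inl := rfl

@[simp] lemma tupleOf_some' (eo : Option (Sym2 V)) (P : Finset V) (g : V → Fin 2) (v : V) :
    tupleOf eo P g (some v) = if v ∈ P then some (Sum.inr (g v)) else none := rfl

lemma tupleOf_congr (eo : Option (Sym2 V)) (P : Finset V) {g g' : V → Fin 2}
    (h : ∀ v ∈ P, g v = g' v) : tupleOf eo P g = tupleOf eo P g' := by
  funext A
  cases A with
  | none => rfl
  | some v =>
    simp only [tupleOf_some']
    split_ifs with hv
    · rw [h v hv]
    · rfl

def gpair (u : V) (ab : Fin 2 × Fin 2) : V → Fin 2 := fun x => if x = u then ab.1 else ab.2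

lemma image_tupleOf_pair (eo : Option (Sym2 V)) {u v : V} :
    (Finset.univ.image fun g : V → Fin 2 => tupleOf eo {u,v} g)
    = Finset.univ.image (fun ab : Fin 2 × Fin 2 => tupleOf eo {u,v} (gpair u ab)) := by
  apply Finset.ext; intro t
  simp only [Finset.mem_image, Finset.mem_univ, true_and]
  constructor
  · rintro ⟨g, rfl⟩
    refine ⟨(g u, g v), (tupleOf_congr _ _ fun x hx => ?_).symm⟩
    rcases Finset.mem_insert.mp hx with rfl | hx
    · simp [gpair]
    · simp only [Finset.mem_singleton] at hx; subst hx
      by_cases hxu : x = u <;> simp [gpair, hxu]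
  · rintro ⟨ab, rfl⟩; exact ⟨gpair u ab, rfl⟩

lemma tupleOf_pair_injective (eo : Option (Sym2 V)) {u v : V} (huv : u ≠ v) :
    Function.Injective (fun ab : Fin 2 × Fin 2 => tupleOf eo {u,v} (gpair u ab)) := by
  intro a b h
  have h1 := congrFun h (some u)
  have h2 := congrFun h (some v)
  simp [gpair, huv.symm] at h1 h2
  exact Prod.ext h1 h2

lemma card_filter_image_pair (eo : Option (Sym2 V)) {u v : V} (huv : u ≠ v)
    (Q : Tup V → Prop) [DecidablePred Q] :
    (((Finset.univ.image fun g : V → Fin 2 => tupleOf eo {u,v} g)).filter Q).card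
    = ((Finset.univ : Finset (Fin 2 × Fin 2)).filter
        (fun ab => Q (tupleOf eo {u,v} (gpair u ab)))).card := by
  rw [image_tupleOf_pair eo, Finset.filter_image,
    Finset.card_image_of_injective _ (tupleOf_pair_injective eo huv)]

lemma card_filter_finsum {α β : Type*} (s : Finset α) (F : α → Multiset β)
    (p : β → Prop) [DecidablePred p] :
    (Multiset.filter p (∑ e ∈ s, F e)).card = ∑ e ∈ s, (Multiset.filter p (F e)).card := by
  classical
  induction s using Finset.cons_induction with
  | empty => simp
  | cons a s ha ih => simp [Finset.sum_insert ha, Multiset.filter_add, ih]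

lemma card_filter_val {α : Type*} (s : Finset α) (p : α → Prop) [DecidablePred p] :
    (Multiset.filter p s.val).card = (s.filter p).card := by
  simp [Finset.card, Finset.filter_val]

lemma sym2_exists (e : Sym2 V) : ∃ u v : V, e = s(u,v) :=
  Sym2.inductionOn e fun u v => ⟨u, v, rfl⟩

lemma bA_q (eo : Option (Sym2 V)) {u v : V} (huv : u ≠ v) (j : V) (w : Fin 2) :
    (Multiset.filter (fun t => t (some j) = some (Sum.inr w))
      (Finset.univ.image fun g : V → Fin 2 => tupleOf eo {u,v} g).val).card
    = if j ∈ ({u,v} : Finset V) then 2 else 0 := by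
  rw [card_filter_val, card_filter_image_pair eo huv]
  by_cases hj : j ∈ ({u,v} : Finset V)
  · rw [if_pos hj]
    rcases Finset.mem_insert.mp hj with rfl | hj'
    · have : ∀ ab : Fin 2 × Fin 2,
          (tupleOf eo {j,v} (gpair j ab) (some j) = some (Sum.inr w)) ↔ ab.1 = w := by
        intro ab; simp [gpair, hj]
      rw [Finset.filter_congr (fun ab _ => this ab)]
      fin_cases w <;> decide
    · simp only [Finset.mem_singleton] at hj'; subst hj'
      have : ∀ ab : Fin 2 × Fin 2,
          (tupleOf eo {u,j} (gpair u ab) (some j) = some (Sum.inr w)) ↔ ab.2 = w := by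
        intro ab; simp [gpair, hj, huv.symm]
      rw [Finset.filter_congr (fun ab _ => this ab)]
      fin_cases w <;> decide
  · rw [if_neg hj]
    have : ∀ ab : Fin 2 × Fin 2,
        ¬ (tupleOf eo {u,v} (gpair u ab) (some j) = some (Sum.inr w)) := by
      intro ab
      have hj' : j ∉ ({u,v} : Finset V) := hj
      simp [hj']
    rw [Finset.filter_false_of_mem (fun ab _ => this ab)]
    simp

lemma bC_q {u v : V} (huv : u ≠ v) (j : V) (w : Fin 2) :
    (Multiset.filter (fun t => t (some j) = some (Sum.inr w))
      (Finset.univ.image fun p : Fin 2 => tupleOf none ({u,v} : Finset V) fun _ => p).val).card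
    = if j ∈ ({u,v} : Finset V) then 1 else 0 := by
  rw [card_filter_val]
  have hinj : Function.Injective (fun p : Fin 2 => tupleOf none ({u,v} : Finset V) fun _ => p) := by
    intro a b h
    have h1 := congrFun h (some u)
    simp at h1
    exact h1
  rw [Finset.filter_image, Finset.card_image_of_injective _ hinj]
  by_cases hj : j ∈ ({u,v} : Finset V)
  · rw [if_pos hj]
    have : ∀ p : Fin 2,
        (tupleOf none ({u,v} : Finset V) (fun _ => p) (some j) = some (Sum.inr w)) ↔ p = w := by
      intro p; simp [hj]
    rw [Finset.filter_congr (fun p _ => this p)]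
    simp [Finset.filter_eq']
  · rw [if_neg hj]
    have : ∀ p : Fin 2,
        ¬ (tupleOf none ({u,v} : Finset V) (fun _ => p) (some j) = some (Sum.inr w)) := by
      intro p; simp [hj]
    rw [Finset.filter_false_of_mem (fun p _ => this p)]
    simp

-- zero blocks for patterns mentioning the edge attribute
lemma bA_T_ne {e : Sym2 V} {i j : V} (he : e ≠ s(i,j)) {T : Finset (Attr V)} (hT : none ∈ T) :
    (Multiset.filter (fun t => ∀ A ∈ T, t A = some (patF s(i,j) A))
      (Finset.univ.image fun g : V → Fin 2 => tupleOf (some e) (endpoints e) g).val).card = 0 := by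
  rw [Multiset.card_eq_zero, Multiset.filter_eq_nil]
  intro t ht hsat
  rw [Finset.mem_val, Finset.mem_image] at ht
  obtain ⟨g, -, rfl⟩ := ht
  have := hsat none hT
  simp only [tupleOf_none', Option.map_some, patF, Option.some.injEq, Sum.inl.injEq] at this
  exact he this

lemma bB_T (z : Sym2 V) {i j : V} {T : Finset (Attr V)} (hT : none ∈ T) :
    (Multiset.filter (fun t => ∀ A ∈ T, t A = some (patF s(i,j) A))
      (Finset.univ.image fun g : V → Fin 2 => tupleOf none (endpoints z) g).val).card = 0 := by
  rw [Multiset.card_eq_zero, Multiset.filter_eq_nil]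
  intro t ht hsat
  rw [Finset.mem_val, Finset.mem_image] at ht
  obtain ⟨g, -, rfl⟩ := ht
  have := hsat none hT
  simp only [tupleOf_none', Option.map_none] at this
  exact Option.some_ne_none _ this.symm

lemma bC_T (z : Sym2 V) {i j : V} {T : Finset (Attr V)} (hT : none ∈ T) :
    (Multiset.filter (fun t => ∀ A ∈ T, t A = some (patF s(i,j) A))
      (Finset.univ.image fun p : Fin 2 => tupleOf none (endpoints z) fun _ => p).val).card = 0 := by
  rw [Multiset.card_eq_zero, Multiset.filter_eq_nil]
  intro t ht hsat
  rw [Finset.mem_val, Finset.mem_image] at ht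
  obtain ⟨p, -, rfl⟩ := ht
  have := hsat none hT
  simp only [tupleOf_none', Option.map_none] at this
  exact Option.some_ne_none _ this.symm

lemma bA_p2 {i j : V} (hij : i ≠ j) :
    (Multiset.filter (fun t => ∀ A ∈ ({none, some i} : Finset (Attr V)), t A = some (patF s(i,j) A))
      (Finset.univ.image fun g : V → Fin 2 => tupleOf (some s(i,j)) (endpoints s(i,j)) g).val).card
    = 2 := by
  rw [endpoints_mk, card_filter_val, card_filter_image_pair _ hij]
  have key : ∀ ab : Fin 2 × Fin 2,
      ((∀ A ∈ ({none, some i} : Finset (Attr V)),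
        tupleOf (some s(i,j)) {i,j} (gpair i ab) A = some (patF s(i,j) A)) ↔ ab.1 = 0) := by
    intro ab
    constructor
    · intro h
      have := h (some i) (by simp)
      simpa [gpair, patF] using this
    · intro h A hA
      rcases Finset.mem_insert.mp hA with rfl | hA
      · rfl
      · simp only [Finset.mem_singleton] at hA; subst hA
        simp [gpair, patF, h]
  rw [Finset.filter_congr (fun ab _ => key ab)]
  decide

lemma mem_patT {i j : V} (A : Attr V) :
    A ∈ patT (s(i,j)) ↔ A = none ∨ A = some i ∨ A = some j := by
  simp only [patT, endpoints_mk, Finset.mem_insert, Finset.mem_image, Finset.mem_singleton]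
  constructor
  · rintro (rfl | ⟨x, (rfl | rfl), rfl⟩)
    · exact Or.inl rfl
    · exact Or.inr (Or.inl rfl)
    · exact Or.inr (Or.inr rfl)
  · rintro (rfl | rfl | rfl)
    · exact Or.inl rfl
    · exact Or.inr ⟨i, Or.inl rfl, rfl⟩
    · exact Or.inr ⟨j, Or.inr rfl, rfl⟩

lemma bA_p3 {i j : V} (hij : i ≠ j) :
    (Multiset.filter (fun t => ∀ A ∈ patT (s(i,j)), t A = some (patF s(i,j) A))
      (Finset.univ.image fun g : V → Fin 2 => tupleOf (some s(i,j)) (endpoints s(i,j)) g).val).card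
    = 1 := by
  rw [endpoints_mk, card_filter_val, card_filter_image_pair _ hij]
  have key : ∀ ab : Fin 2 × Fin 2,
      ((∀ A ∈ patT (s(i,j)),
        tupleOf (some s(i,j)) {i,j} (gpair i ab) A = some (patF s(i,j) A))
        ↔ (ab.1 = 0 ∧ ab.2 = 0)) := by
    intro ab
    constructor
    · intro h
      have h1 := h (some i) ((mem_patT _).mpr (Or.inr (Or.inl rfl)))
      have h2 := h (some j) ((mem_patT _).mpr (Or.inr (Or.inr rfl)))
      constructor
      · simpa [gpair, patF] using h1
      · simpa [gpair, patF, hij.symm] using h2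
    · rintro ⟨h1, h2⟩ A hA
      rcases (mem_patT A).mp hA with rfl | rfl | rfl
      · rfl
      · simp [gpair, patF, h1]
      · simp [gpair, patF, hij.symm, h2]
  rw [Finset.filter_congr (fun ab _ => key ab)]
  decide


lemma cnt_two {i j : V} (hadj : G.Adj i j) :
    cnt (redDB G) ({none, some i} : Finset (Attr V)) (patF s(i, j)) = 2 * numE G := by
  classical
  have hmem : s(i,j) ∈ G.edgeFinset := by
    rw [SimpleGraph.mem_edgeFinset, SimpleGraph.mem_edgeSet]; exact hadj
  unfold cnt redDB
  simp only [Multiset.filter_add, Multiset.card_add, card_filter_finsum,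
    Multiset.filter_nsmul, Multiset.card_nsmul]
  rw [Finset.sum_eq_single_of_mem (s(i,j)) hmem (fun e he hne => by
      rw [bA_T_ne hne (by simp)]; ring)]
  rw [Finset.sum_eq_zero (fun z hz => by
      rw [bB_T z (i := i) (j := j) (by simp)]; ring)]
  rw [Finset.sum_eq_zero (fun e he => by
      rw [bC_T e (i := i) (j := j) (by simp)]; ring)]
  rw [bA_p2 hadj.ne]
  ring

lemma cnt_one {i j : V} (hadj : G.Adj i j) :
    cnt (redDB G) (patT (s(i,j))) (patF s(i, j)) = numE G := by
  classical
  have hmem : s(i,j) ∈ G.edgeFinset := by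
    rw [SimpleGraph.mem_edgeFinset, SimpleGraph.mem_edgeSet]; exact hadj
  unfold cnt redDB
  simp only [Multiset.filter_add, Multiset.card_add, card_filter_finsum,
    Multiset.filter_nsmul, Multiset.card_nsmul]
  rw [Finset.sum_eq_single_of_mem (s(i,j)) hmem (fun e he hne => by
      rw [bA_T_ne hne ((mem_patT (i := i) (j := j) none).mpr (Or.inl rfl))]; ring)]
  rw [Finset.sum_eq_zero (fun z hz => by
      rw [bB_T z (i := i) (j := j) ((mem_patT (i := i) (j := j) none).mpr (Or.inl rfl))]; ring)]
  rw [Finset.sum_eq_zero (fun e he => by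
      rw [bC_T e (i := i) (j := j) ((mem_patT (i := i) (j := j) none).mpr (Or.inl rfl))]; ring)]
  rw [bA_p3 hadj.ne]
  ring

lemma cnt1_eq (j : V) (w w' : Fin 2) :
    cnt1 (redDB G) (some j) (Sum.inr w) = cnt1 (redDB G) (some j) (Sum.inr w') := by
  classical
  unfold cnt1 redDB
  simp only [Multiset.filter_add, Multiset.card_add, card_filter_finsum,
    Multiset.filter_nsmul, Multiset.card_nsmul]
  congr 1
  congr 1
  · refine Finset.sum_congr rfl (fun e he => ?_)
    obtain ⟨u, v, rfl⟩ := sym2_exists e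
    have huv : u ≠ v := by
      rw [SimpleGraph.mem_edgeFinset, SimpleGraph.mem_edgeSet] at he
      exact he.ne
    rw [endpoints_mk, bA_q _ huv j w, bA_q _ huv j w']
  · refine Finset.sum_congr rfl (fun z hz => ?_)
    obtain ⟨u, v, rfl⟩ := sym2_exists z
    have huv : u ≠ v := by
      simp only [Finset.mem_filter] at hz
      exact fun h => hz.2.1 (by simp [h])
    rw [endpoints_mk, bA_q _ huv j w, bA_q _ huv j w']
  · refine Finset.sum_congr rfl (fun e he => ?_)
    obtain ⟨u, v, rfl⟩ := sym2_exists e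
    have huv : u ≠ v := by
      rw [SimpleGraph.mem_edgeFinset, SimpleGraph.mem_edgeSet] at he
      exact he.ne
    rw [endpoints_mk, bC_q huv j w, bC_q huv j w']

lemma cnt1_pos {i j : V} (hE : 1 ≤ numE G) (hadj : G.Adj i j) :
    0 < cnt1 (redDB G) (some j) (Sum.inr 0) := by
  classical
  have hmem : s(i,j) ∈ G.edgeFinset := by
    rw [SimpleGraph.mem_edgeFinset, SimpleGraph.mem_edgeSet]; exact hadj
  unfold cnt1
  rw [Multiset.card_pos_iff_exists_mem]
  refine ⟨tupleOf (some s(i,j)) (endpoints s(i,j)) (fun _ => 0), ?_⟩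
  rw [Multiset.mem_filter]
  constructor
  · unfold redDB
    rw [Multiset.mem_add]
    left
    rw [Multiset.mem_add]
    left
    rw [Multiset.mem_sum]
    refine ⟨s(i,j), hmem, ?_⟩
    refine Multiset.mem_nsmul.mpr ⟨by omega, ?_⟩
    rw [Finset.mem_val, Finset.mem_image]
    exact ⟨fun _ => 0, Finset.mem_univ _, rfl⟩
  · have : j ∈ endpoints (s(i,j)) := by rw [endpoints_mk]; simp
    simp [this]


lemma patT_inter {i j : V} {S : Finset (Attr V)}
    (hES : none ∈ S) (hiS : some i ∈ S) (hjS : some j ∉ S) :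
    patT (s(i,j)) ∩ S = ({none, some i} : Finset (Attr V)) := by
  ext A
  simp only [Finset.mem_inter, mem_patT, Finset.mem_insert, Finset.mem_singleton]
  constructor
  · rintro ⟨(rfl | rfl | rfl), hAS⟩
    · exact Or.inl rfl
    · exact Or.inr rfl
    · exact absurd hAS hjS
  · rintro (rfl | rfl)
    · exact ⟨Or.inl rfl, hES⟩
    · exact ⟨Or.inr (Or.inl rfl), hiS⟩

lemma patT_sdiff {i j : V} {S : Finset (Attr V)}
    (hES : none ∈ S) (hiS : some i ∈ S) (hjS : some j ∉ S) :
    patT (s(i,j)) \ S = ({some j} : Finset (Attr V)) := by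
  ext A
  simp only [Finset.mem_sdiff, mem_patT, Finset.mem_singleton]
  constructor
  · rintro ⟨(rfl | rfl | rfl), hAS⟩
    · exact absurd hES hAS
    · exact absurd hiS hAS
    · rfl
  · rintro rfl
    exact ⟨Or.inr (Or.inr rfl), hjS⟩


/-- Exact-estimation case of Lemma 1: for an edge `e_r = {v_i, v_j} ∈ E`, the pattern
`p = {A_E = x_r, A_i = x_1, A_j = x_1}`, and a label attribute set `S` with `A_E ∈ S`,
`A_i ∈ S`, `A_j ∉ S`: `c_D({A_E = x_r, A_i = x_1}) = 2·|E|` and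
`Est(p, L_S(D)) = |E| = c_D(p)`, so `Err(L_S(D), p) = 0`. -/
theorem redDB_exact_case {V : Type*} [Fintype V] [DecidableEq V]
    (G : SimpleGraph V) [DecidableRel G.Adj]
    (hV : 2 ≤ Fintype.card V) (hE : 1 ≤ numE G)
    (i j : V) (hadj : G.Adj i j)
    (S : Finset (Attr V)) (hES : none ∈ S) (hiS : some i ∈ S) (hjS : some j ∉ S) :
    cnt (redDB G) ({none, some i} : Finset (Attr V)) (patF s(i, j)) = 2 * numE G ∧
    est G (redDB G) S (patT s(i, j)) (patF s(i, j)) = (numE G : ℚ) ∧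
    cnt (redDB G) (patT s(i, j)) (patF s(i, j)) = numE G ∧
    err G (redDB G) S (patT s(i, j)) (patF s(i, j)) = 0 := by

  have h2 := cnt_two G hadj
  have h1 := cnt_one G hadj
  have hpos := cnt1_pos G hE hadj
  have heq := cnt1_eq G j 1 0
  have hest : est G (redDB G) S (patT s(i, j)) (patF s(i, j)) = (numE G : ℚ) := by
    unfold est
    rw [patT_inter hES hiS hjS, patT_sdiff hES hiS hjS, h2, Finset.prod_singleton]
    have hdom : dom G (some j) = ({Sum.inr 0, Sum.inr 1} : Finset (Val V)) := rfl
    have hf : patF (s(i,j)) (some j) = Sum.inr 0 := rfl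
    rw [hdom, Finset.sum_pair (by simp : (Sum.inr 0 : Val V) ≠ Sum.inr 1), hf, heq]
    have hN0 : ((cnt1 (redDB G) (some j) (Sum.inr 0) : ℚ)) ≠ 0 := by
      exact_mod_cast hpos.ne'
    push_cast
    field_simp
    ring
  refine ⟨h2, hest, h1, ?_⟩
  unfold err
  rw [h1, hest]
  simp


end PatternLabel
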